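/- In a directed acyclic graph G over vertex set V, suppose every edge p–q in an undirected graph S over V satisfies: p and q are adjacent in S if and only if for every subset R ⊆ V \ {p,q}, p and q are d-connected given R in G. If the joint distribution is Markov and faithful to G, and S is constructed by removing the edge p–q from the complete graph exactly when some subset R ⊆ V \ {p,q} renders p and q conditionally independent, then S equals the skeleton of G (the undirected graph of adjacencies of G). -/

import Mathlib

/-- The predicate on a walk (list of vertices) that every interior vertex is "active"
given the conditioning set `S`: colliders must have a descendant in `S`, and
non-colliders must lie outside `S`. -/
def ActiveList {V : Type*} (E : V → V → Prop) (S : Set V) : List V → Prop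
  | a :: b :: c :: l =>
      ((E a b ∧ E c b) → ∃ d, Relation.ReflTransGen E b d ∧ d ∈ S) ∧
      (¬(E a b ∧ E c b) → b ∉ S) ∧
      ActiveList E S (b :: c :: l)
  | _ => True

/-- `p` and `q` are d-connected given `S` in the directed graph `E`. -/
def DConnected {V : Type*} (E : V → V → Prop) (S : Set V) (p q : V) : Prop :=
  ∃ l : List V, l.Nodup ∧ l.Chain' (fun a b => E a b ∨ E b a) ∧
    l.head? = some p ∧ l.getLast? = some q ∧ ActiveList E S l

section Aux

variable {V : Type*} (E : V → V → Prop) (S : Set V)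

/-- The condition `ActiveList` imposes on an interior triple. -/
def TripleCond (a b c : V) : Prop :=
  ((E a b ∧ E c b) → ∃ d, Relation.ReflTransGen E b d ∧ d ∈ S) ∧
  (¬(E a b ∧ E c b) → b ∉ S)

theorem activeList_iff : ∀ l : List V, ActiveList E S l ↔
    ∀ (l1 : List V) (a b c : V) (l2 : List V),
      l = l1 ++ a :: b :: c :: l2 → TripleCond E S a b c
  | [] => by
    simp only [ActiveList, true_iff]
    intro l1 a b c l2 h
    have := congrArg List.length h
    simp at this
  | [x] => by
    simp only [ActiveList, true_iff]
    intro l1 a b c l2 h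
    have := congrArg List.length h
    simp at this; omega
  | [x, y] => by
    simp only [ActiveList, true_iff]
    intro l1 a b c l2 h
    have := congrArg List.length h
    simp at this; omega
  | a :: b :: c :: t => by
    have hcons : ActiveList E S (a :: b :: c :: t) ↔
        TripleCond E S a b c ∧ ActiveList E S (b :: c :: t) := by
      simp only [ActiveList, TripleCond, and_assoc]
    rw [hcons, activeList_iff (b :: c :: t)]
    constructor
    · rintro ⟨h1, h2⟩ l1 a' b' c' l2 h
      cases l1 with
      | nil =>
        simp at h
        obtain ⟨rfl, rfl, rfl, rfl⟩ := h
        exact h1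
      | cons x l1' =>
        simp at h
        exact h2 l1' a' b' c' l2 h.2
    · intro h
      refine ⟨h [] a b c t rfl, fun l1 a' b' c' l2 hl => ?_⟩
      exact h (a :: l1) a' b' c' l2 (by simp [hl])

theorem tripleCond_symm {a b c : V} (h : TripleCond E S a b c) : TripleCond E S c b a := by
  obtain ⟨h1, h2⟩ := h
  exact ⟨fun ⟨x, y⟩ => h1 ⟨y, x⟩, fun hn => h2 (fun ⟨x, y⟩ => hn ⟨y, x⟩)⟩

theorem activeList_reverse {l : List V} (h : ActiveList E S l) :
    ActiveList E S l.reverse := by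
  rw [activeList_iff] at h ⊢
  intro l1 a b c l2 hl
  have : l = l2.reverse ++ c :: b :: a :: l1.reverse := by
    have := congrArg List.reverse hl
    simpa using this
  exact tripleCond_symm E S (h l2.reverse c b a l1.reverse this)

theorem dconnected_symm {p q : V} (h : DConnected E S p q) : DConnected E S q p := by
  obtain ⟨l, hnd, hch, hh, hlast, hact⟩ := h
  refine ⟨l.reverse, List.nodup_reverse.mpr hnd, ?_, ?_, ?_, activeList_reverse E S hact⟩
  · refine List.isChain_reverse.mpr ?_
    exact hch.imp (fun a b hab => hab.symm)
  · rwa [List.head?_reverse]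
  · rwa [List.getLast?_reverse]

/-- Blocking lemma: if `p` and `q` are nonadjacent and `q` is not a descendant of
`p`, then the parents of `p` d-separate `p` from `q`. -/
theorem block {p q : V} (hacyclic : ∀ v, ¬ Relation.TransGen E v v)
    (hpq : ¬ E p q) (hqp : ¬ E q p) (hnd : ¬ Relation.TransGen E p q)
    (hne : p ≠ q) : ¬ DConnected E {v | E v p} p q := by
  set R : Set V := {v | E v p} with hR
  rintro ⟨l, hndup, hch, hh, hlast, hact⟩
  -- l = p :: b :: t
  obtain ⟨l', rfl⟩ : ∃ l', l = p :: l' := by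
    cases l with
    | nil => simp at hh
    | cons x t => simp at hh; exact ⟨t, by rw [hh]⟩
  obtain ⟨b, t, rfl⟩ : ∃ b t, l' = b :: t := by
    cases l' with
    | nil => simp at hlast; exact absurd hlast hne
    | cons b t => exact ⟨b, t, rfl⟩
  -- auxiliary induction
  have aux : ∀ (t : List V) (a b : V), Relation.ReflTransGen E p a → E a b →
      List.Chain' (fun a b => E a b ∨ E b a) (a :: b :: t) →
      ActiveList E R (a :: b :: t) →
      (a :: b :: t).getLast? = some q → False := by
    intro t
    induction t with
    | nil =>
      intro a b hdesc hab _ _ hlast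
      simp at hlast
      subst hlast
      exact hnd (Relation.TransGen.tail' hdesc hab)
    | cons c t' ih =>
      intro a b hdesc hab hch hact hlast
      obtain ⟨hcond1, hcond2, hact'⟩ := hact
      have hch' : List.Chain' (fun a b => E a b ∨ E b a) (b :: c :: t') := hch.tail
      have hbc : E b c ∨ E c b := (List.isChain_cons_cons.mp hch).1.elim (fun _ => (List.isChain_cons_cons.mp hch').1) (fun _ => (List.isChain_cons_cons.mp hch').1)
      cases hbc with
      | inl hbc =>
        exact ih b c (hdesc.tail hab) hbc hch' hact' (by simpa using hlast)
      | inr hcb =>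
        obtain ⟨d, hbd, hdp⟩ := hcond1 ⟨hab, hcb⟩
        exact hacyclic p (Relation.TransGen.tail'
          (((hdesc.tail hab).trans hbd)) hdp)
  -- top level: first edge
  have hfirst : E p b ∨ E b p := (List.isChain_cons_cons.mp hch).1
  cases hfirst with
  | inl hpb =>
    exact aux t p b Relation.ReflTransGen.refl hpb hch hact hlast
  | inr hbp =>
    cases t with
    | nil =>
      simp at hlast; subst hlast
      exact hqp hbp
    | cons c t' =>
      obtain ⟨hcond1, hcond2, _⟩ := hact
      have hnotcoll : ¬ (E p b ∧ E c b) := by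
        rintro ⟨hpb, -⟩
        exact hacyclic p (Relation.TransGen.head hpb (Relation.TransGen.single hbp))
      exact hcond2 hnotcoll hbp

end Aux

/-- Correctness of the PC-style skeleton construction: if the distribution
(abstracted by its conditional-independence relation `CI`) is Markov and faithful
to a DAG `G = (V, E)`, the undirected graph `SAdj` is obtained from the complete
graph by removing `p – q` exactly when some `R ⊆ V \ {p,q}` renders `p` and `q`
conditionally independent, and adjacency in `SAdj` is characterized by
d-connection given every such `R`, then `SAdj` is the skeleton of `G`. -/
theorem stmt_15 {V : Type*} [Fintype V] [DecidableEq V]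
    (E : V → V → Prop) (hacyclic : ∀ v, ¬ Relation.TransGen E v v)
    (CI : V → V → Set V → Prop)
    (hMarkov : ∀ (p q : V) (S : Set V), p ≠ q → p ∉ S → q ∉ S →
      ¬ DConnected E S p q → CI p q S)
    (hFaithful : ∀ (p q : V) (S : Set V), p ≠ q → p ∉ S → q ∉ S →
      CI p q S → ¬ DConnected E S p q)
    (SAdj : V → V → Prop)
    (hSdef : ∀ p q : V, p ≠ q →
      (SAdj p q ↔ ¬ ∃ R : Set V, p ∉ R ∧ q ∉ R ∧ CI p q R))
    (hchar : ∀ p q : V, p ≠ q →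
      (SAdj p q ↔ ∀ R : Set V, p ∉ R → q ∉ R → DConnected E R p q)) :
    ∀ p q : V, p ≠ q → (SAdj p q ↔ (E p q ∨ E q p)) := by
  intro p q hne
  rw [hchar p q hne]
  constructor
  · intro h
    by_contra hadj
    push_neg at hadj
    obtain ⟨hpq, hqp⟩ := hadj
    have hcase : ¬ Relation.TransGen E p q ∨ ¬ Relation.TransGen E q p := by
      by_contra hc
      push_neg at hc
      exact hacyclic p (hc.1.trans hc.2)
    cases hcase with
    | inl hnd =>
      have hpR : p ∉ {v | E v p} := fun hpp => hacyclic p (Relation.TransGen.single hpp)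
      exact block E hacyclic hpq hqp hnd hne (h _ hpR hqp)
    | inr hnd =>
      have hqR : q ∉ {v | E v q} := fun hqq => hacyclic q (Relation.TransGen.single hqq)
      exact block E hacyclic hqp hpq hnd hne.symm
        (dconnected_symm E _ (h _ hpq hqR))
  · intro hadj R hpR hqR
    exact ⟨[p, q], by simp [hne], List.isChain_pair.mpr hadj, rfl, rfl, trivial⟩
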